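/- arXiv:1309.2998 — 3 statements merged into one kernel-verified Lean document; each statement's English description precedes it below -/
import Mathlib

section
/- There exist fields ℚ ⊆ K ⊆ L ⊆ \overline{ℚ} such that K/ℚ is an infinite algebraic extension, K does not satisfy the Bogomolov property (B), the extension L/K is finite with [L:K] > 1, and L/K is not Bogomolov. -/
open NumberField IntermediateField
open scoped Classical

noncomputable section

namespace RelBogomolov

/-- The "denominator ideal" of an element `x` of a field `K`: the ideal of integers `a` of `K`
such that `a * x` is an algebraic integer.  For a number field `K`, the logarithm of its absolute
norm is the finite (non-archimedean) part `∑_{v finite} log max (1, |x|_v)` of the Weil height. -/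
def denomIdeal (K : Type*) [Field K] (x : K) : Ideal (𝓞 K) where
  carrier := {a | IsIntegral ℤ ((a : K) * x)}
  add_mem' := by
    intro a b ha hb
    have := ha.add hb
    simpa [add_mul] using this
  zero_mem' := by
    simpa using isIntegral_zero
  smul_mem' := by
    intro c a ha
    have hc : IsIntegral ℤ (c : K) := RingOfIntegers.isIntegral_coe c
    simpa [smul_eq_mul, mul_assoc] using hc.mul ha

/-- The absolute logarithmic Weil height of an element of a number field `K`:
`h(x) = (1/[K:ℚ]) (∑_{v archimedean} [K_v : ℚ_v] log max (1, |x|_v)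
          + ∑_{v finite} [K_v : ℚ_v] log max (1, |x|_v))`,
where the finite part is expressed as the log of the absolute norm of the denominator ideal. -/
def nfHeight (K : Type*) [Field K] [NumberField K] (x : K) : ℝ :=
  (Module.finrank ℚ K : ℝ)⁻¹ *
    ((∑ w : InfinitePlace K, (w.mult : ℝ) * Real.log (max 1 (w x))) +
      Real.log (Ideal.absNorm (denomIdeal K x)))

/-- The absolute logarithmic Weil height of a complex number that is algebraic over `ℚ`,
computed in the number field `ℚ(x)` (junk value `0` for transcendental numbers). -/
def algHeight (x : ℂ) : ℝ :=
  if hx : IsIntegral ℚ x then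
    letI : FiniteDimensional ℚ ℚ⟮x⟯ := adjoin.finiteDimensional hx
    haveI : CharZero ℚ⟮x⟯ := charZero_of_injective_algebraMap (algebraMap ℚ ℚ⟮x⟯).injective
    haveI : NumberField ℚ⟮x⟯ := ⟨⟩
    nfHeight ℚ⟮x⟯ (AdjoinSimple.gen ℚ x)
  else 0

/-- The multiplicative Weil height `H(x) = exp h(x)`. -/
def mulHeight (x : ℂ) : ℝ := Real.exp (algHeight x)

/-- A fixed algebraic closure of `ℚ`: the field of algebraic numbers inside `ℂ`. -/
def Qbar : IntermediateField ℚ ℂ := _root_.algebraicClosure ℚ ℂ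

/-- A subfield `K` of `ℚ̄` has the Bogomolov property (B) if there is `ε > 0` such that no
nonzero element of `K` has height strictly between `0` and `ε`. -/
def HasBogomolovProperty (K : IntermediateField ℚ ℂ) : Prop :=
  ∃ ε : ℝ, 0 < ε ∧ ∀ x : ℂ, x ∈ K → x ≠ 0 → ¬(0 < algHeight x ∧ algHeight x < ε)

/-- The extension `L/K` is Bogomolov if there is `ε > 0` such that every nonzero `x ∈ L`
with `0 < h(x) < ε` lies in `K`. -/
def IsBogomolovExtension (K L : IntermediateField ℚ ℂ) : Prop :=
  ∃ ε : ℝ, 0 < ε ∧ ∀ x : ℂ, x ∈ L → x ≠ 0 → 0 < algHeight x → algHeight x < ε → x ∈ K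

/-- `δ(M)`: the number of archimedean places of `M` (junk value `0` in the infinite case). -/
def archPlaces (M : IntermediateField ℚ ℂ) : ℕ :=
  if h : FiniteDimensional ℚ ↥M then
    letI := h
    haveI : CharZero ↥M := charZero_of_injective_algebraMap (algebraMap ℚ ↥M).injective
    haveI : NumberField ↥M := ⟨⟩
    Fintype.card (InfinitePlace ↥M)
  else 0

/-- The absolute norm `N_{F/ℚ}` of an ideal of the ring of integers of a subfield `F ⊆ ℚ̄`
(junk value `0` in the infinite case). -/
def idealNorm {F : IntermediateField ℚ ℂ} (I : Ideal (𝓞 ↥F)) : ℕ :=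
  if h : FiniteDimensional ℚ ↥F then
    letI := h
    haveI : CharZero ↥F := charZero_of_injective_algebraMap (algebraMap ℚ ↥F).injective
    haveI : NumberField ↥F := ⟨⟩
    Ideal.absNorm I
  else 0

/-- The relative discriminant ideal `D_{F'/F}` of an extension of number fields, defined as
the ideal of `𝓞 F` generated by the discriminants of all `[F':F]`-tuples of integers of `F'`. -/
def relDiscrNF (F F' : Type*) [Field F] [Field F'] [Algebra F F'] : Ideal (𝓞 F) :=
  Ideal.span {d : 𝓞 F | ∃ x : Fin (Module.finrank F F') → 𝓞 F', d = Algebra.discr (𝓞 F) x}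

/-- The relative discriminant ideal `D_{C/F}` for subfields `F ≤ C` of `ℚ̄`
(junk value `⊥` if `F ≰ C`). -/
def relDiscr (F C : IntermediateField ℚ ℂ) : Ideal (𝓞 ↥F) :=
  if h : F ≤ C then
    letI : Algebra ↥F ↥C := (IntermediateField.inclusion h).toAlgebra
    relDiscrNF ↥F ↥C
  else ⊥

/-- The inclusion `𝓞 F →+* 𝓞 M` of rings of integers induced by an inclusion `F ≤ M` of
subfields of `ℚ̄`. -/
def intInclusion {F M : IntermediateField ℚ ℂ} (h : F ≤ M) : 𝓞 ↥F →+* 𝓞 ↥M :=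
  RingOfIntegers.mapRingHom (IntermediateField.inclusion h)

/-- `ρ(K/F)`: the least real number `ρ` such that every finite subextension `M` of `K/F` is
contained in a finite subextension `M'` of `K/F` with `δ(M')/[M':F] ≤ ρ`. -/
def rho (F K : IntermediateField ℚ ℂ) : ℝ :=
  sInf {r : ℝ | ∀ M : IntermediateField ℚ ℂ, F ≤ M → M ≤ K → FiniteDimensional ℚ ↥M →
    ∃ M' : IntermediateField ℚ ℂ, M ≤ M' ∧ M' ≤ K ∧ FiniteDimensional ℚ ↥M' ∧
      (archPlaces M' : ℝ) / (relfinrank F M' : ℝ) ≤ r}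

/-- The norm excess discriminant `E(K, C/F)`: the infimum over finite subextensions `M` of
`K/F` (with `e = [M:F]`, `s = [C:F]`) of
`N_{F/ℚ}(D_{C/F}^e / gcd(D_{C/F}^e, D_{M/F}^s))^{1/e}`; here the gcd of two ideals is their
sup, and the norm of the quotient ideal is the quotient of the norms. -/
def normExcess (K F C : IntermediateField ℚ ℂ) : ℝ :=
  sInf {r : ℝ | ∃ M : IntermediateField ℚ ℂ, F ≤ M ∧ M ≤ K ∧ FiniteDimensional ℚ ↥M ∧
    r = ((idealNorm ((relDiscr F C) ^ (relfinrank F M)) : ℝ) /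
          (idealNorm ((relDiscr F C) ^ (relfinrank F M) ⊔ (relDiscr F M) ^ (relfinrank F C)) : ℝ))
        ^ ((relfinrank F M : ℝ)⁻¹)}

/-- `a(𝔭)`: the greatest `k` such that `x^ℓ ≡ α (mod 𝔭^k)` has a solution `x ∈ 𝓞 F`. -/
def aExp (F : Type*) [Field F] (ℓ : ℕ) (α : 𝓞 F) (𝔭 : Ideal (𝓞 F)) : ℕ :=
  sSup {k : ℕ | ∃ x : 𝓞 F, x ^ ℓ - α ∈ 𝔭 ^ k}

end RelBogomolov

open RelBogomolov
section Aux

/-- Height of an element whose `m`-th power is 2. -/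
theorem algHeight_of_pow_eq_two {α : ℂ} {m : ℕ} (hm : m ≠ 0) (hα : α ^ m = 2) :
    algHeight α = Real.log 2 / m := by
  have hintZ : IsIntegral ℤ α :=
    ⟨Polynomial.X ^ m - Polynomial.C 2, Polynomial.monic_X_pow_sub_C 2 hm, by simp [hα]⟩
  have hq : IsIntegral ℚ α := hintZ.tower_top
  rw [algHeight, dif_pos hq]
  letI : FiniteDimensional ℚ ℚ⟮α⟯ := IntermediateField.adjoin.finiteDimensional hq
  haveI : CharZero ℚ⟮α⟯ := charZero_of_injective_algebraMap (algebraMap ℚ ℚ⟮α⟯).injective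
  haveI : NumberField ℚ⟮α⟯ := ⟨⟩
  set g := IntermediateField.AdjoinSimple.gen ℚ α with hg
  have hcoe : (algebraMap ℚ⟮α⟯ ℂ) g = α := IntermediateField.AdjoinSimple.algebraMap_gen ℚ α
  have hgen : g ^ m = (2 : ℚ⟮α⟯) := by
    apply (algebraMap ℚ⟮α⟯ ℂ).injective
    rw [map_pow, hcoe, hα, map_ofNat]
  have hgint : IsIntegral ℤ g :=
    ⟨Polynomial.X ^ m - Polynomial.C 2, Polynomial.monic_X_pow_sub_C 2 hm, by simp [hgen]⟩
  have hden : denomIdeal ℚ⟮α⟯ g = ⊤ := by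
    rw [Ideal.eq_top_iff_one]
    show IsIntegral ℤ (((1 : 𝓞 ℚ⟮α⟯) : ℚ⟮α⟯) * g)
    simpa using hgint
  have hw : ∀ w : NumberField.InfinitePlace ℚ⟮α⟯,
      Real.log (max 1 (w g)) = Real.log 2 / m := by
    intro w
    have h2 : w g ^ m = 2 := by
      rw [← map_pow, hgen, ← NumberField.InfinitePlace.norm_embedding_eq, map_ofNat]
      simp
    have h1 : 1 < w g := by
      by_contra h
      push_neg at h
      have := pow_le_one₀ (n := m) (apply_nonneg w g) h
      rw [h2] at this; norm_num at this
    rw [max_eq_right h1.le]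
    have := Real.log_pow (w g) m
    rw [h2] at this
    field_simp [← this]
    linarith [this]
  rw [nfHeight, hden, Ideal.absNorm_top]
  simp only [Nat.cast_one, Real.log_one, add_zero]
  rw [Finset.sum_congr rfl (fun w _ => by rw [hw w])]
  rw [← Finset.sum_mul, ← Nat.cast_sum, NumberField.InfinitePlace.sum_mult_eq]
  have hd : (Module.finrank ℚ ℚ⟮α⟯ : ℝ) ≠ 0 := by
    exact_mod_cast Module.finrank_pos.ne'
  field_simp

end Aux
namespace Aux2

/-- `c n = 2 ^ (1 / 2^n)` as a real number. -/
noncomputable def c (n : ℕ) : ℝ := (2 : ℝ) ^ (((2 : ℕ) ^ n : ℝ)⁻¹)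

theorem c_pos (n : ℕ) : 0 < c n := Real.rpow_pos_of_pos (by norm_num) _

theorem c_pow (n : ℕ) : c n ^ (2 ^ n : ℕ) = 2 := by
  have := Real.rpow_inv_natCast_pow (x := (2:ℝ)) (n := 2 ^ n) (by norm_num)
    (pow_ne_zero n two_ne_zero)
  simpa [c] using this

theorem c_pow_complex (n : ℕ) : ((c n : ℂ)) ^ (2 ^ n : ℕ) = 2 := by
  have := c_pow n
  exact_mod_cast congrArg (fun r : ℝ => (r : ℂ)) this

/-- The field `K = ℚ(2^{1/2}, 2^{1/4}, …)`. -/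
noncomputable def KK : IntermediateField ℚ ℂ := ⨆ n : ℕ, ℚ⟮(c n : ℂ)⟯

/-- The real numbers as an intermediate field of `ℚ ⊆ ℂ`. -/
noncomputable def RR : IntermediateField ℚ ℂ :=
  Subfield.toIntermediateField Complex.ofRealHom.fieldRange
    (fun q => ⟨(q : ℝ), by simp⟩)

theorem mem_RR_iff {x : ℂ} : x ∈ RR ↔ ∃ r : ℝ, (r : ℂ) = x := Iff.rfl

theorem KK_le_RR : KK ≤ RR := by
  refine iSup_le fun n => ?_
  rw [IntermediateField.adjoin_simple_le_iff]
  exact ⟨c n, rfl⟩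

theorem c_mem_KK (n : ℕ) : (c n : ℂ) ∈ KK :=
  (le_iSup (fun n : ℕ => ℚ⟮(c n : ℂ)⟯) n) (IntermediateField.mem_adjoin_simple_self ℚ _)

theorem I_not_mem_KK : Complex.I ∉ KK := by
  intro h
  obtain ⟨r, hr⟩ := KK_le_RR h
  have := congrArg Complex.im hr
  simp at this

/-- The field `L = K(i)`. -/
noncomputable def LL : IntermediateField ℚ ℂ := KK ⊔ ℚ⟮Complex.I⟯

theorem KK_le_LL : KK ≤ LL := le_sup_left

theorem I_mem_LL : Complex.I ∈ LL :=
  (le_sup_right : ℚ⟮Complex.I⟯ ≤ LL) (IntermediateField.mem_adjoin_simple_self ℚ _)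

theorem extendScalars_eq : IntermediateField.extendScalars KK_le_LL
    = IntermediateField.adjoin ↥KK {Complex.I} := by
  apply IntermediateField.restrictScalars_injective ℚ
  erw [IntermediateField.extendScalars_restrictScalars,
    IntermediateField.restrictScalars_adjoin_eq_sup]
  rfl

theorem I_isIntegral : IsIntegral ↥KK Complex.I := by
  refine ⟨Polynomial.X ^ 2 + Polynomial.C 1, ?_, ?_⟩
  · exact Polynomial.monic_X_pow_add_C 1 two_ne_zero
  · simp [Complex.I_sq]

instance : FiniteDimensional ↥KK ↥(IntermediateField.extendScalars KK_le_LL) := by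
  rw [extendScalars_eq]
  exact IntermediateField.adjoin.finiteDimensional I_isIntegral

theorem one_lt_relfinrank : 1 < IntermediateField.relfinrank KK LL := by
  rw [IntermediateField.relfinrank_eq_finrank_of_le KK_le_LL]
  by_contra h
  push_neg at h
  interval_cases hh : Module.finrank ↥KK ↥(IntermediateField.extendScalars KK_le_LL)
  · exact Module.finrank_pos.ne' hh
  · have hbot := IntermediateField.finrank_eq_one_iff.mp hh
    have : Complex.I ∈ IntermediateField.extendScalars KK_le_LL :=
      (IntermediateField.mem_extendScalars _).mpr I_mem_LL
    rw [hbot, IntermediateField.mem_bot] at this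
    obtain ⟨y, hy⟩ := this
    exact I_not_mem_KK (hy ▸ y.2)

theorem LL_le_Qbar : LL ≤ RelBogomolov.Qbar := by
  refine sup_le (iSup_le fun n => ?_) ?_ <;>
  rw [IntermediateField.adjoin_simple_le_iff] <;>
  rw [RelBogomolov.Qbar, mem_algebraicClosure_iff']
  · exact IsIntegral.tower_top
      (⟨Polynomial.X ^ (2^n) - Polynomial.C 2,
        Polynomial.monic_X_pow_sub_C 2 (pow_ne_zero n two_ne_zero),
        by simp [c_pow_complex n]⟩ : IsIntegral ℤ ((c n : ℂ)))
  · exact ⟨Polynomial.X ^ 2 + Polynomial.C 1,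
      Polynomial.monic_X_pow_add_C 1 two_ne_zero, by simp [Complex.I_sq]⟩

end Aux2
namespace Aux2

open Polynomial in
theorem irr_X_pow_sub_two (k : ℕ) (hk : k ≠ 0) :
    Irreducible (Polynomial.X ^ k - Polynomial.C (2 : ℚ)) := by
  have hmonic : (X ^ k - C (2 : ℤ)).Monic := monic_X_pow_sub_C 2 hk
  have hdeg : (X ^ k - C (2 : ℤ)).degree = (k : WithBot ℕ) :=
    degree_X_pow_sub_C (Nat.pos_of_ne_zero hk) 2
  have hZ : Irreducible (X ^ k - C (2 : ℤ)) := by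
    apply irreducible_of_eisenstein_criterion (P := Ideal.span {(2 : ℤ)})
    · rw [Ideal.span_singleton_prime (by norm_num)]
      exact Int.prime_two
    · rw [hmonic.leadingCoeff, Ideal.mem_span_singleton]
      norm_num
    · intro n hn
      rw [hdeg] at hn
      have hn' : n < k := by exact_mod_cast hn
      rw [coeff_sub, coeff_X_pow, coeff_C, if_neg hn'.ne, Ideal.mem_span_singleton]
      split_ifs <;> norm_num
    · rw [hdeg]
      exact_mod_cast Nat.pos_of_ne_zero hk
    · rw [coeff_sub, coeff_X_pow, coeff_C, if_neg (Ne.symm hk), if_pos rfl,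
        Ideal.span_singleton_pow, Ideal.mem_span_singleton]
      norm_num
    · exact hmonic.isPrimitive
  have := (hmonic.irreducible_iff_irreducible_map_fraction_map (K := ℚ)).mp hZ
  rw [show (C (2:ℚ)) = 2 from map_ofNat C 2]
  simpa using this

theorem finrank_adjoin_c (n : ℕ) : Module.finrank ℚ ℚ⟮(c n : ℂ)⟯ = 2 ^ n := by
  have hZint : IsIntegral ℤ ((c n : ℂ)) :=
    ⟨Polynomial.X ^ (2^n) - Polynomial.C 2,
      Polynomial.monic_X_pow_sub_C 2 (pow_ne_zero n two_ne_zero),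
      by simp [c_pow_complex n]⟩
  have hq : IsIntegral ℚ ((c n : ℂ)) := hZint.tower_top
  have hmin : minpoly ℚ ((c n : ℂ)) = Polynomial.X ^ (2^n) - Polynomial.C (2:ℚ) := by
    refine (minpoly.eq_of_irreducible_of_monic
      (irr_X_pow_sub_two (2^n) (pow_ne_zero n two_ne_zero)) ?_
      (Polynomial.monic_X_pow_sub_C 2 (pow_ne_zero n two_ne_zero))).symm
    simp [c_pow_complex n]
  rw [IntermediateField.adjoin.finrank hq, hmin, Polynomial.natDegree_X_pow_sub_C]

theorem KK_not_finiteDimensional : ¬ FiniteDimensional ℚ ↥KK := by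
  intro h
  set d := Module.finrank ℚ ↥KK with hd
  have hle : ℚ⟮(c d : ℂ)⟯ ≤ KK := by
    rw [IntermediateField.adjoin_simple_le_iff]; exact c_mem_KK d
  have hfin : Module.finrank ℚ ℚ⟮(c d : ℂ)⟯ ≤ d :=
    LinearMap.finrank_le_finrank_of_injective
      (f := (IntermediateField.inclusion hle).toLinearMap)
      (IntermediateField.inclusion hle).toRingHom.injective
  rw [finrank_adjoin_c d] at hfin
  exact absurd hfin (Nat.lt_two_pow_self (n := d)).not_ge

theorem exists_small (ε : ℝ) (hε : 0 < ε) :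
    ∃ n : ℕ, 2 ≤ n ∧ Real.log 2 / ((2:ℕ) ^ n : ℕ) < ε := by
  obtain ⟨n, hn⟩ := exists_nat_gt (Real.log 2 / ε)
  refine ⟨n + 2, by omega, ?_⟩
  rw [div_lt_iff₀ (by positivity)]
  rw [div_lt_iff₀ hε] at hn
  have hc : (n : ℝ) ≤ ((2:ℕ) ^ (n+2) : ℕ) := by
    exact_mod_cast ((Nat.lt_two_pow_self (n := n)).le.trans
      (Nat.pow_le_pow_right (by norm_num) (by omega)))
  nlinarith

theorem algHeight_c (n : ℕ) : algHeight ((c n : ℂ)) = Real.log 2 / ((2:ℕ) ^ n : ℕ) :=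
  algHeight_of_pow_eq_two (pow_ne_zero n two_ne_zero) (c_pow_complex n)

theorem notB : ¬ HasBogomolovProperty KK := by
  rintro ⟨ε, hε, H⟩
  obtain ⟨n, _, hn⟩ := exists_small ε hε
  refine H (c n : ℂ) (c_mem_KK n) (by exact_mod_cast (c_pos n).ne') ⟨?_, ?_⟩
  · rw [algHeight_c n]
    exact div_pos (Real.log_pos one_lt_two) (by positivity)
  · rw [algHeight_c n]; exact hn

theorem notBext : ¬ IsBogomolovExtension KK LL := by
  rintro ⟨ε, hε, H⟩
  obtain ⟨n, hn2, hn⟩ := exists_small ε hε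
  set x : ℂ := Complex.I * (c n : ℂ) with hxdef
  obtain ⟨k, hk⟩ : 4 ∣ 2 ^ n := by
    have : (2:ℕ)^2 ∣ 2^n := pow_dvd_pow 2 hn2
    simpa using this
  have hI : Complex.I ^ (2 ^ n : ℕ) = 1 := by
    rw [hk, pow_mul]
    norm_num
  have hx : x ^ (2 ^ n : ℕ) = 2 := by
    rw [hxdef, mul_pow, hI, one_mul, c_pow_complex]
  have hx0 : x ≠ 0 := by
    apply mul_ne_zero Complex.I_ne_zero
    exact_mod_cast (c_pos n).ne'
  have hxL : x ∈ LL := mul_mem I_mem_LL (KK_le_LL (c_mem_KK n))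
  have hh : algHeight x = Real.log 2 / ((2:ℕ) ^ n : ℕ) :=
    algHeight_of_pow_eq_two (pow_ne_zero n two_ne_zero) hx
  have hmem : x ∈ KK := by
    refine H x hxL hx0 ?_ ?_
    · rw [hh]; exact div_pos (Real.log_pos one_lt_two) (by positivity)
    · rw [hh]; exact hn
  obtain ⟨r, hr⟩ := KK_le_RR hmem
  have h1 := congrArg Complex.im hr
  have h2 : x.im = c n := by simp [hxdef]
  rw [h2] at h1
  simp at h1
  exact (c_pos n).ne' h1.symm

end Aux2

/-- There exist `ℚ ⊆ K ⊆ L ⊆ ℚ̄` with `K/ℚ` infinite, `K` failing (B), and `L/K` a finite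
extension of degree `> 1` which is not Bogomolov. -/
theorem exists_finite_not_bogomolovExtension :
    ∃ (K L : IntermediateField ℚ ℂ) (hKL : K ≤ L), L ≤ Qbar ∧
      ¬ FiniteDimensional ℚ ↥K ∧ ¬ HasBogomolovProperty K ∧
      FiniteDimensional ↥K ↥(extendScalars hKL) ∧ 1 < relfinrank K L ∧
      ¬ IsBogomolovExtension K L := by
  exact ⟨Aux2.KK, Aux2.LL, Aux2.KK_le_LL, Aux2.LL_le_Qbar, Aux2.KK_not_finiteDimensional,
    Aux2.notB, inferInstance, Aux2.one_lt_relfinrank, Aux2.notBext⟩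
end
end

section
/- There exist fields ℚ ⊆ K ⊆ L ⊆ \overline{ℚ} such that K/ℚ is an infinite algebraic extension, K does not satisfy the Bogomolov property (B), the extension L/K is infinite, and L/K is not Bogomolov. -/
open NumberField IntermediateField
open scoped Classical

noncomputable section

open RelBogomolov

namespace RelBogomolovProof
open RelBogomolov Polynomial

lemma rat_pow_ne_two {n : ℕ} (hn : 2 ≤ n) (b : ℚ) : b ^ n ≠ 2 := by
  intro h
  have hint : IsIntegral ℤ b := by
    refine ⟨X ^ n - C 2, monic_X_pow_sub_C _ (by omega), ?_⟩
    have : (Polynomial.aeval b) (X ^ n - C (2:ℤ)) = 0 := by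
      simp [h, map_ofNat]
    simpa [Polynomial.aeval_def] using this
  obtain ⟨m, rfl⟩ := IsIntegrallyClosed.isIntegral_iff.mp hint
  simp only [algebraMap_int_eq, eq_intCast] at h
  have hm : m ^ n = 2 := by exact_mod_cast h
  have h2 : m ^ 2 ∣ (2:ℤ) := hm ▸ pow_dvd_pow m hn
  have h3 : m ^ 2 ≤ 2 := Int.le_of_dvd (by norm_num) h2
  have h4 : |m| ≤ 1 := by nlinarith [sq_abs m, abs_nonneg m]
  have h5 : |m ^ n| ≤ 1 := by
    rw [abs_pow]
    exact pow_le_one₀ (abs_nonneg m) h4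
  rw [hm] at h5
  norm_num at h5

/-- the positive real `n`-th root of `2`, as a complex number. -/
def r (n : ℕ) : ℂ := ((2 : ℝ) ^ ((n : ℝ)⁻¹) : ℝ)

lemma r_re_pos (n : ℕ) : (0:ℝ) < (2 : ℝ) ^ ((n : ℝ)⁻¹) := Real.rpow_pos_of_pos (by norm_num) _

lemma r_ne_zero (n : ℕ) : r n ≠ 0 := by
  simp only [r, ne_eq, Complex.ofReal_eq_zero]
  exact (r_re_pos n).ne'

lemma r_im (n : ℕ) : (r n).im = 0 := Complex.ofReal_im _

lemma r_pow (n : ℕ) (hn : n ≠ 0) : r n ^ n = 2 := by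
  rw [r, ← Complex.ofReal_pow, Real.rpow_inv_natCast_pow (by norm_num) hn]
  norm_num

lemma r_one : r 1 = 2 := by
  have := r_pow 1 one_ne_zero
  simpa using this

lemma r_pow_nat (n : ℕ) (hn : n ≠ 0) : r n ^ n = ((2:ℕ) : ℂ) := by
  rw [r_pow n hn]; norm_num

lemma r_mul_pow (m c : ℕ) (hm : m ≠ 0) (hc : c ≠ 0) : r (m * c) ^ c = r m := by
  rw [r, r, ← Complex.ofReal_pow]
  congr 1
  rw [← Real.rpow_natCast ((2:ℝ) ^ (((m*c : ℕ) : ℝ))⁻¹) c, ← Real.rpow_mul (by norm_num)]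
  congr 1
  push_cast
  field_simp

lemma r_zpow_eq (m k : ℕ) (a b : ℤ) (hm : m ≠ 0) (hk : k ≠ 0)
    (hab : (k : ℤ) * a + (m : ℤ) * b = 1) :
    r m ^ a * r k ^ b = r (m * k) := by
  rw [r, r, r, ← Complex.ofReal_zpow, ← Complex.ofReal_zpow, ← Complex.ofReal_mul]
  congr 1
  have h2 : (0:ℝ) ≤ 2 := by norm_num
  rw [← Real.rpow_intCast ((2:ℝ) ^ (((m : ℕ) : ℝ))⁻¹) a,
    ← Real.rpow_intCast ((2:ℝ) ^ (((k : ℕ) : ℝ))⁻¹) b,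
    ← Real.rpow_mul h2, ← Real.rpow_mul h2, ← Real.rpow_add (by norm_num)]
  congr 1
  have hmr : ((m:ℕ):ℝ) ≠ 0 := Nat.cast_ne_zero.mpr hm
  have hkr : ((k:ℕ):ℝ) ≠ 0 := Nat.cast_ne_zero.mpr hk
  have habr : (k : ℝ) * (a : ℝ) + (m : ℝ) * (b : ℝ) = 1 := by exact_mod_cast hab
  push_cast
  field_simp
  nlinarith [habr]

lemma isIntegral_int_of_pow {x : ℂ} {n N : ℕ} (hn : n ≠ 0) (hx : x ^ n = N) :
    IsIntegral ℤ x := by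
  refine ⟨X ^ n - C (N : ℤ), monic_X_pow_sub_C _ hn, ?_⟩
  have : (Polynomial.aeval x) (X ^ n - C ((N:ℕ) : ℤ)) = 0 := by
    simp [hx]
  simpa [Polynomial.aeval_def] using this

lemma isIntegral_rat_of_pow {x : ℂ} {n N : ℕ} (hn : n ≠ 0) (hx : x ^ n = N) :
    IsIntegral ℚ x :=
  (isIntegral_int_of_pow hn hx).tower_top

lemma I_mul_r_pow (n : ℕ) (hn : n ≠ 0) : (Complex.I * r n) ^ (4 * n) = ((16:ℕ) : ℂ) := by
  rw [mul_pow]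
  have h1 : Complex.I ^ (4*n) = 1 := by rw [pow_mul, Complex.I_pow_four, one_pow]
  have h2 : (r n) ^ (4*n) = 16 := by
    rw [mul_comm, pow_mul, r_pow n hn]; norm_num
  rw [h1, h2, one_mul]; norm_num

lemma algHeight_pow_nat {x : ℂ} {n N : ℕ} (hn : n ≠ 0) (hN : 1 ≤ N) (hx : x ^ n = N) :
    algHeight x = Real.log N / n := by
  have hZ : IsIntegral ℤ x := isIntegral_int_of_pow hn hx
  have hq : IsIntegral ℚ x := hZ.tower_top
  letI : FiniteDimensional ℚ ℚ⟮x⟯ := adjoin.finiteDimensional hq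
  haveI : CharZero ℚ⟮x⟯ := charZero_of_injective_algebraMap (algebraMap ℚ ℚ⟮x⟯).injective
  haveI : NumberField ℚ⟮x⟯ := ⟨⟩
  have halg : algHeight x = nfHeight ℚ⟮x⟯ (AdjoinSimple.gen ℚ x) := by
    rw [algHeight, dif_pos hq]
  rw [halg]
  set K := ℚ⟮x⟯
  set g := AdjoinSimple.gen ℚ x with hg
  have hcoe : (algebraMap K ℂ) g = x := AdjoinSimple.algebraMap_gen ℚ x
  have hgen : g ^ n = (N : K) := by
    apply (algebraMap K ℂ).injective
    rw [map_pow, hcoe, map_natCast, hx]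
  have hdenom : denomIdeal K g = ⊤ := by
    rw [Ideal.eq_top_iff_one]
    show IsIntegral ℤ (((1 : 𝓞 K) : K) * g)
    rw [RingOfIntegers.coe_eq_algebraMap, map_one, one_mul]
    refine ⟨X ^ n - C (N : ℤ), monic_X_pow_sub_C _ hn, ?_⟩
    have : (Polynomial.aeval g) (X ^ n - C ((N:ℕ) : ℤ)) = 0 := by
      simp [hgen]
    simpa [Polynomial.aeval_def] using this
  have hw : ∀ w : InfinitePlace K, w g = (N : ℝ) ^ ((n : ℝ)⁻¹) := by
    intro w
    have h1 : (w g) ^ n = (N : ℝ) := by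
      rw [← map_pow, hgen, ← InfinitePlace.norm_embedding_eq, map_natCast]
      simp
    rw [← h1, Real.pow_rpow_inv_natCast (apply_nonneg w g) hn]
  have hmax : max 1 ((N : ℝ) ^ ((n : ℝ)⁻¹)) = (N : ℝ) ^ ((n : ℝ)⁻¹) :=
    max_eq_right (Real.one_le_rpow (by exact_mod_cast hN) (by positivity))
  rw [nfHeight]
  have hsum : (∑ w : InfinitePlace K, (w.mult : ℝ) * Real.log (max 1 (w g)))
      = (Module.finrank ℚ K : ℝ) * Real.log ((N : ℝ) ^ ((n : ℝ)⁻¹)) := by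
    simp only [hw, hmax]
    rw [← Finset.sum_mul, ← Nat.cast_sum, InfinitePlace.sum_mult_eq]
  rw [hsum, hdenom, ← Ideal.one_eq_top, map_one, Nat.cast_one, Real.log_one, add_zero]
  have hNpos : (0:ℝ) < N := by exact_mod_cast Nat.lt_of_lt_of_le Nat.zero_lt_one hN
  rw [Real.log_rpow hNpos]
  have hd : (Module.finrank ℚ K : ℝ) ≠ 0 := by
    exact_mod_cast (Module.finrank_pos (R := ℚ) (M := K)).ne'
  have hnr : (n : ℝ) ≠ 0 := Nat.cast_ne_zero.mpr hn
  field_simp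
  exact mul_div_cancel_left₀ _ hd

lemma algHeight_r (n : ℕ) (hn : n ≠ 0) : algHeight (r n) = Real.log 2 / n := by
  have h := algHeight_pow_nat (N := 2) hn one_le_two (r_pow_nat n hn)
  rw [h]; norm_num

lemma algHeight_I_mul_r (n : ℕ) (hn : n ≠ 0) :
    algHeight (Complex.I * r n) = Real.log 2 / n := by
  have h := algHeight_pow_nat (n := 4*n) (N := 16)
    (mul_ne_zero four_ne_zero hn) (by norm_num) (I_mul_r_pow n hn)
  rw [h]
  have h16 : ((16:ℕ):ℝ) = 2 ^ 4 := by norm_num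
  rw [h16, Real.log_pow]
  have hnr : (n:ℝ) ≠ 0 := Nat.cast_ne_zero.mpr hn
  push_cast
  field_simp

lemma finrank_r (n : ℕ) (hodd : Odd n) : Module.finrank ℚ ℚ⟮r n⟯ = n := by
  have hn : n ≠ 0 := by
    rintro rfl
    simp [Nat.odd_iff] at hodd
  have hint : IsIntegral ℚ (r n) := isIntegral_rat_of_pow hn (r_pow_nat n hn)
  have hirr : Irreducible (X ^ n - C (2:ℚ)) := by
    apply X_pow_sub_C_irreducible_of_odd hodd
    intro p hp _ b
    exact rat_pow_ne_two hp.two_le b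
  have hmin : minpoly ℚ (r n) = X ^ n - C (2:ℚ) := by
    refine (minpoly.eq_of_irreducible_of_monic (B := ℂ) hirr ?_ (monic_X_pow_sub_C _ hn)).symm
    simp [r_pow n hn]
  rw [adjoin.finrank hint, hmin, natDegree_X_pow_sub_C]

/-- The subfield of real numbers of `ℂ`, as an intermediate field of `ℚ ⊆ ℂ`. -/
def realField : IntermediateField ℚ ℂ where
  carrier := {z : ℂ | z.im = 0}
  mul_mem' := by
    intro a b ha hb
    simp only [Set.mem_setOf_eq] at *
    simp [Complex.mul_im, ha, hb]
  add_mem' := by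
    intro a b ha hb
    simp only [Set.mem_setOf_eq] at *
    simp [Complex.add_im, ha, hb]
  algebraMap_mem' := by
    intro q
    simp [Complex.ratCast_im]
  inv_mem' := by
    intro a ha
    simp only [Set.mem_setOf_eq] at *
    simp [Complex.inv_im, ha]

lemma mem_realField {z : ℂ} : z ∈ realField ↔ z.im = 0 := Iff.rfl

end RelBogomolovProof

open RelBogomolovProof


set_option maxHeartbeats 1600000 in
/-- There exist `ℚ ⊆ K ⊆ L ⊆ ℚ̄` with `K/ℚ` infinite, `K` failing (B), and `L/K` an infinite
extension which is not Bogomolov. -/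
theorem exists_infinite_not_bogomolovExtension :
    ∃ (K L : IntermediateField ℚ ℂ) (hKL : K ≤ L), L ≤ Qbar ∧
      ¬ FiniteDimensional ℚ ↥K ∧ ¬ HasBogomolovProperty K ∧
      ¬ FiniteDimensional ↥K ↥(extendScalars hKL) ∧
      ¬ IsBogomolovExtension K L  := by
  classical
  have h3 : ∀ k : ℕ, (3:ℕ) ^ k ≠ 0 := fun k => pow_ne_zero _ (by norm_num)
  have h5 : ∀ k : ℕ, (5:ℕ) ^ k ≠ 0 := fun k => pow_ne_zero _ (by norm_num)
  set S : Set ℂ := Set.range (fun k : ℕ => r (3 ^ k)) with hS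
  set T : Set ℂ := S ∪ Set.range (fun k : ℕ => Complex.I * r (5 ^ k)) with hT
  have hKL : adjoin ℚ S ≤ adjoin ℚ T := adjoin.mono _ _ _ Set.subset_union_left
  have hrS : ∀ k : ℕ, r (3 ^ k) ∈ adjoin ℚ S := fun k => subset_adjoin _ _ ⟨k, rfl⟩
  refine ⟨adjoin ℚ S, adjoin ℚ T, hKL, ?_, ?_, ?_, ?_, ?_⟩
  · -- `L ≤ Qbar`
    apply adjoin_le_iff.mpr
    rintro x (⟨k, rfl⟩ | ⟨k, rfl⟩)
    · exact isIntegral_rat_of_pow (h3 k) (r_pow_nat _ (h3 k))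
    · exact isIntegral_rat_of_pow (mul_ne_zero four_ne_zero (h5 k)) (I_mul_r_pow _ (h5 k))
  · -- `K/ℚ` is infinite
    intro hfin
    set N := Module.finrank ℚ ↥(adjoin ℚ S) with hN
    have hNpos : 0 < N := Module.finrank_pos
    have hle : ℚ⟮r (3 ^ N)⟯ ≤ adjoin ℚ S := adjoin_simple_le_iff.mpr (hrS N)
    have h1 := relfinrank_mul_relfinrank (bot_le : ⊥ ≤ ℚ⟮r (3 ^ N)⟯) hle
    rw [relfinrank_bot_left, relfinrank_bot_left, finrank_r _ (Odd.pow (by decide))] at h1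
    have hlt : N < 3 ^ N := Nat.lt_pow_self (by norm_num)
    rcases Nat.eq_zero_or_pos (relfinrank ℚ⟮r (3 ^ N)⟯ (adjoin ℚ S)) with h0 | hpos
    · rw [h0, mul_zero] at h1
      omega
    · have h2 : 3 ^ N ≤ 3 ^ N * relfinrank ℚ⟮r (3 ^ N)⟯ (adjoin ℚ S) :=
        Nat.le_mul_of_pos_right _ hpos
      rw [h1, ← hN] at h2
      omega
  · -- `K` does not satisfy (B)
    rintro ⟨ε, hε, hbog⟩
    obtain ⟨k, hk⟩ := pow_unbounded_of_one_lt (Real.log 2 / ε) (by norm_num : (1:ℝ) < 3)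
    have hl2 : (0:ℝ) < Real.log 2 := Real.log_pos (by norm_num)
    refine hbog (r (3 ^ k)) (hrS k) (r_ne_zero _) ⟨?_, ?_⟩
    · rw [algHeight_r _ (h3 k)]
      have : (0:ℝ) < ((3 ^ k : ℕ) : ℝ) := by positivity
      exact div_pos hl2 this
    · rw [algHeight_r _ (h3 k)]
      rw [div_lt_iff₀ (by positivity : (0:ℝ) < ((3 ^ k : ℕ) : ℝ))]
      rw [div_lt_iff₀ hε] at hk
      calc Real.log 2 < 3 ^ k * ε := hk
        _ = ε * ((3 ^ k : ℕ) : ℝ) := by push_cast; ring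
  · -- `L/K` is infinite
    intro hfin
    set d := Module.finrank ↥(adjoin ℚ S) ↥(extendScalars hKL) with hd
    obtain ⟨k, hk⟩ : ∃ k : ℕ, d < 5 ^ k := ⟨d, Nat.lt_pow_self (by norm_num)⟩
    have hIL : Complex.I ∈ adjoin ℚ T := by
      have h0 : Complex.I * r (5 ^ 0) ∈ adjoin ℚ T := subset_adjoin _ _ (Or.inr ⟨0, rfl⟩)
      rw [pow_zero, r_one] at h0
      have h2L : (2:ℂ) ∈ adjoin ℚ T := by
        have := (adjoin ℚ T).algebraMap_mem (2:ℚ)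
        simpa using this
      have hI : Complex.I = Complex.I * 2 * 2⁻¹ := by
        rw [mul_assoc, mul_inv_cancel₀ two_ne_zero, mul_one]
      rw [hI]
      exact mul_mem h0 (inv_mem h2L)
    have hθL : r (5 ^ k) ∈ adjoin ℚ T := by
      have h1 : Complex.I * r (5 ^ k) ∈ adjoin ℚ T := subset_adjoin _ _ (Or.inr ⟨k, rfl⟩)
      have h2 : (-Complex.I) * (Complex.I * r (5 ^ k)) = r (5 ^ k) := by
        rw [← mul_assoc, neg_mul, Complex.I_mul_I, neg_neg, one_mul]
      rw [← h2]
      exact mul_mem (neg_mem hIL) h1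
    haveI := hfin
    set θ : ℂ := r (5 ^ k) with hθ
    set v : Fin (d+1) → ↥(extendScalars hKL) :=
      fun i => (⟨θ, hθL⟩ : ↥(extendScalars hKL)) ^ (i : ℕ) with hv
    have hnli : ¬ LinearIndependent ↥(adjoin ℚ S) v := by
      intro hli
      have := hli.fintype_card_le_finrank
      rw [Fintype.card_fin] at this
      omega
    obtain ⟨g, hgsum, i₀, hgi₀⟩ := Fintype.not_linearIndependent_iff.mp hnli
    have hrel : ∑ i : Fin (d+1), (g i : ℂ) * θ ^ (i : ℕ) = 0 := by
      have h := congrArg ((extendScalars hKL).val) hgsum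
      rw [map_sum, map_zero] at h
      rw [← h]
      apply Finset.sum_congr rfl
      intro i _
      rw [Algebra.smul_def, map_mul, (extendScalars hKL).val.commutes, hv]
      rw [map_pow]
      rfl
    have hKsup : adjoin ℚ S ≤ ⨆ m : ℕ, ℚ⟮r (3 ^ m)⟯ := by
      apply adjoin_le_iff.mpr
      rintro x ⟨m, rfl⟩
      exact (SetLike.le_def.mp (le_iSup (fun m : ℕ => ℚ⟮r (3 ^ m)⟯) m))
        (mem_adjoin_simple_self ℚ _)
    have hmono : Monotone (fun m : ℕ => ℚ⟮r (3 ^ m)⟯) := by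
      intro a b hab
      simp only
      apply adjoin_simple_le_iff.mpr
      have heq : r (3 ^ a) = r (3 ^ b) ^ (3 ^ (b - a)) := by
        rw [← r_mul_pow (3 ^ a) (3 ^ (b - a)) (h3 a) (h3 (b - a)), ← pow_add,
          Nat.add_sub_cancel' hab]
      rw [heq]
      exact pow_mem (mem_adjoin_simple_self ℚ _) _
    have hgm : ∀ i : Fin (d+1), ∃ m : ℕ, (g i : ℂ) ∈ ℚ⟮r (3 ^ m)⟯ := by
      intro i
      have hgK : (g i : ℂ) ∈ ⨆ m : ℕ, ℚ⟮r (3 ^ m)⟯ := hKsup (g i).2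
      rw [← SetLike.mem_coe, coe_iSup_of_directed hmono.directed_le] at hgK
      simpa using hgK
    choose mi hmi using hgm
    set m := Finset.univ.sup mi with hm
    have hci : ∀ i, (g i : ℂ) ∈ ℚ⟮r (3 ^ m)⟯ :=
      fun i => hmono (Finset.le_sup (Finset.mem_univ i)) (hmi i)
    set A : IntermediateField ℚ ℂ := ℚ⟮r (3 ^ m)⟯ with hA
    set q : Polynomial ↥A :=
      ∑ i : Fin (d+1), Polynomial.C (⟨(g i : ℂ), hci i⟩ : ↥A) * Polynomial.X ^ (i : ℕ) with hqdef
    have hqcoeff : ∀ j : Fin (d+1), q.coeff (j : ℕ) = ⟨(g j : ℂ), hci j⟩ := by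
      intro j
      rw [hqdef, Polynomial.finset_sum_coeff]
      rw [Finset.sum_eq_single j]
      · rw [Polynomial.coeff_C_mul, Polynomial.coeff_X_pow, if_pos rfl, mul_one]
      · intro b _ hbj
        rw [Polynomial.coeff_C_mul, Polynomial.coeff_X_pow,
          if_neg (fun h => hbj (Fin.ext h.symm)), mul_zero]
      · intro hj
        exact absurd (Finset.mem_univ j) hj
    have hq0 : q ≠ 0 := by
      intro h
      apply hgi₀
      have hc := hqcoeff i₀
      rw [h, Polynomial.coeff_zero] at hc
      have hval : (g i₀ : ℂ) = 0 := by
        have h2 := congrArg (Subtype.val) hc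
        simpa using h2.symm
      exact Subtype.ext hval
    have hqθ : Polynomial.aeval θ q = 0 := by
      rw [hqdef, map_sum, ← hrel]
      apply Finset.sum_congr rfl
      intro i _
      rw [map_mul, Polynomial.aeval_C, map_pow, Polynomial.aeval_X]
      rfl
    have hθintA : IsIntegral ↥A θ :=
      (isIntegral_rat_of_pow (h5 k) (r_pow_nat _ (h5 k))).tower_top
    have hdle : (minpoly ↥A θ).natDegree ≤ d := by
      have h1 := minpoly.degree_le_of_ne_zero ↥A θ hq0 hqθ
      have h2 : q.natDegree ≤ d := by
        rw [hqdef]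
        apply Polynomial.natDegree_sum_le_of_forall_le
        intro i _
        refine (Polynomial.natDegree_C_mul_le _ _).trans ?_
        simpa [Polynomial.natDegree_X_pow] using Nat.lt_succ_iff.mp i.isLt
      exact (Polynomial.natDegree_le_natDegree h1).trans h2
    set β : ℂ := r (3 ^ m * 5 ^ k) with hβ
    have hαβ : β ^ (5 ^ k) = r (3 ^ m) := r_mul_pow _ _ (h3 m) (h5 k)
    have hθβ : β ^ (3 ^ m) = θ := by
      have h := r_mul_pow (5 ^ k) (3 ^ m) (h5 k) (h3 m)
      rw [mul_comm (5 ^ k) (3 ^ m)] at h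
      exact h
    obtain ⟨a, b, hab⟩ : ∃ a b : ℤ, ((5 ^ k : ℕ) : ℤ) * a + ((3 ^ m : ℕ) : ℤ) * b = 1 := by
      have hcop : Nat.Coprime (5 ^ k) (3 ^ m) :=
        Nat.Coprime.pow _ _ (by decide : Nat.Coprime 5 3)
      have h := Nat.gcd_eq_gcd_ab (5 ^ k) (3 ^ m)
      rw [hcop] at h
      exact ⟨_, _, by exact_mod_cast h.symm⟩
    have hβab : β = r (3 ^ m) ^ a * θ ^ b :=
      (r_zpow_eq (3 ^ m) (5 ^ k) a b (h3 m) (h5 k) hab).symm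
    have hAB : A ≤ adjoin ℚ {r (3 ^ m), θ} :=
      adjoin_simple_le_iff.mpr (subset_adjoin _ _ (Set.mem_insert _ _))
    have hBeq : adjoin ℚ {r (3 ^ m), θ} = ℚ⟮β⟯ := by
      apply le_antisymm
      · apply adjoin_le_iff.mpr
        rintro x (rfl | rfl)
        · rw [← hαβ]
          exact pow_mem (mem_adjoin_simple_self ℚ _) _
        · rw [← hθβ]
          exact pow_mem (mem_adjoin_simple_self ℚ _) _
      · apply adjoin_simple_le_iff.mpr
        rw [hβab]
        have e1 : r (3 ^ m) ∈ adjoin ℚ {r (3 ^ m), θ} := subset_adjoin _ _ (Set.mem_insert _ _)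
        have e2 : θ ∈ adjoin ℚ {r (3 ^ m), θ} := subset_adjoin _ _ (Set.mem_insert_of_mem _ rfl)
        exact mul_mem (IntermediateField.pow_mem _ e1 a) (IntermediateField.pow_mem _ e2 b)
    have hExt : extendScalars hAB = adjoin ↥A {r (3 ^ m), θ} := extendScalars_adjoin hAB
    have hAdj : adjoin ↥A {r (3 ^ m), θ} = adjoin ↥A {θ} := by
      apply le_antisymm
      · apply adjoin_le_iff.mpr
        rintro x (rfl | rfl)
        · have hmem : r (3 ^ m) ∈ A := mem_adjoin_simple_self ℚ _
          exact (adjoin ↥A {θ}).algebraMap_mem (⟨r (3 ^ m), hmem⟩ : ↥A)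
        · exact subset_adjoin _ _ rfl
      · exact adjoin.mono _ _ _ (Set.subset_insert _ _)
    have hrfr : relfinrank A (adjoin ℚ {r (3 ^ m), θ}) = (minpoly ↥A θ).natDegree := by
      rw [relfinrank_eq_finrank_of_le hAB, hExt, hAdj]
      exact adjoin.finrank hθintA
    have htower := relfinrank_mul_relfinrank (bot_le : ⊥ ≤ A) hAB
    rw [relfinrank_bot_left, relfinrank_bot_left, hrfr, hBeq] at htower
    have hfA : Module.finrank ℚ ↥A = 3 ^ m := finrank_r _ (Odd.pow (by decide))
    have hfB : Module.finrank ℚ ↥ℚ⟮β⟯ = 3 ^ m * 5 ^ k :=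
      finrank_r _ (Odd.mul (Odd.pow (by decide)) (Odd.pow (by decide)))
    rw [hfA, hfB] at htower
    have hdeg : (minpoly ↥A θ).natDegree = 5 ^ k :=
      Nat.eq_of_mul_eq_mul_left (by positivity) htower
    omega
  · -- `L/K` is not Bogomolov
    rintro ⟨ε, hε, hbog⟩
    obtain ⟨k, hk⟩ := pow_unbounded_of_one_lt (Real.log 2 / ε) (by norm_num : (1:ℝ) < 5)
    have hl2 : (0:ℝ) < Real.log 2 := Real.log_pos (by norm_num)
    set x : ℂ := Complex.I * r (5 ^ k) with hx
    have hxL : x ∈ adjoin ℚ T := subset_adjoin _ _ (Or.inr ⟨k, rfl⟩)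
    have hx0 : x ≠ 0 := mul_ne_zero Complex.I_ne_zero (r_ne_zero _)
    have hpos : 0 < algHeight x := by
      rw [hx, algHeight_I_mul_r _ (h5 k)]
      exact div_pos hl2 (by positivity)
    have hlt : algHeight x < ε := by
      rw [hx, algHeight_I_mul_r _ (h5 k)]
      rw [div_lt_iff₀ (by positivity : (0:ℝ) < ((5 ^ k : ℕ) : ℝ))]
      rw [div_lt_iff₀ hε] at hk
      calc Real.log 2 < 5 ^ k * ε := hk
        _ = ε * ((5 ^ k : ℕ) : ℝ) := by push_cast; ring
    have hxK : x ∈ adjoin ℚ S := hbog x hxL hx0 hpos hlt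
    have hKreal : adjoin ℚ S ≤ realField := by
      apply adjoin_le_iff.mpr
      rintro z ⟨j, rfl⟩
      exact r_im _
    have him : x.im = 0 := hKreal hxK
    rw [hx] at him
    simp only [r, Complex.mul_im, Complex.I_re, Complex.ofReal_im, mul_zero, Complex.I_im,
      Complex.ofReal_re, one_mul, zero_add] at him
    exact absurd him (r_re_pos _).ne'
end
end

section
/- Let K = ⋃_{n≥1} ℚ(3^{1/3^n}) ⊆ \overline{ℚ}, where 3^{1/3^n} denotes the positive real 3^n-th root of 3 (so the roots are chosen compatibly: (3^{1/3^{n+1}})^3 = 3^{1/3^n}). Then every subfield k with ℚ ⊆ k ⊊ K equals ℚ(3^{1/3^i}) for some i ≥ 0; in particular every proper subfield of K is a finite extension of ℚ, and K is not a Bogomolov extension of any proper subfield of itself. -/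
open NumberField IntermediateField
open scoped Classical

noncomputable section

open RelBogomolov

open Polynomial Module

namespace CubeTower

def aR (n : ℕ) : ℝ := (3 : ℝ) ^ (((3 : ℝ) ^ (n : ℕ))⁻¹)
def cC (n : ℕ) : ℂ := ((aR n : ℝ) : ℂ)
def FF (n : ℕ) : IntermediateField ℚ ℂ := ℚ⟮cC n⟯

lemma aR_pos (n : ℕ) : 0 < aR n := Real.rpow_pos_of_pos (by norm_num) _

lemma one_le_aR (n : ℕ) : 1 ≤ aR n :=
  Real.one_le_rpow (by norm_num) (by positivity)

lemma aR_pow (n : ℕ) : aR n ^ ((3:ℕ) ^ n) = 3 := by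
  rw [aR, ← Real.rpow_natCast ((3:ℝ) ^ _) ((3:ℕ)^n), ← Real.rpow_mul (by norm_num)]
  rw [show (((3:ℝ)^(n:ℕ))⁻¹ * ((3:ℕ)^n : ℕ) : ℝ) = 1 by push_cast; field_simp]
  exact Real.rpow_one 3

lemma aR_pow_sub {i j : ℕ} (h : i ≤ j) : aR j ^ ((3:ℕ) ^ (j - i)) = aR i := by
  rw [aR, aR, ← Real.rpow_natCast ((3:ℝ) ^ _) ((3:ℕ)^(j-i)), ← Real.rpow_mul (by norm_num)]
  congr 1
  have h3 : (3:ℝ) ^ (i:ℕ) ≠ 0 := by positivity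
  have : (3:ℝ) ^ (j : ℕ) = (3:ℝ) ^ (i:ℕ) * (3:ℝ) ^ ((j - i : ℕ)) := by
    rw [← pow_add]; congr 1; omega
  push_cast
  rw [this]
  field_simp

lemma cC_pow (n : ℕ) : cC n ^ ((3:ℕ) ^ n) = 3 := by
  rw [cC, ← Complex.ofReal_pow, aR_pow]; norm_num

lemma cC_pow_sub {i j : ℕ} (h : i ≤ j) : cC j ^ ((3:ℕ) ^ (j - i)) = cC i := by
  rw [cC, ← Complex.ofReal_pow, aR_pow_sub h, cC]

lemma no_rat_cube : ∀ b : ℚ, b ^ 3 ≠ 3 := by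
  intro b hb
  haveI : Fact (Nat.Prime 3) := ⟨Nat.prime_three⟩
  have hb0 : b ≠ 0 := by rintro rfl; norm_num at hb
  have h1 : padicValRat 3 (b ^ 3) = 3 * padicValRat 3 b := padicValRat.pow b
  rw [hb] at h1
  have h2 : padicValRat 3 3 = 1 := by
    have : ((3:ℕ):ℚ) = (3:ℚ) := by norm_num
    rw [← this, padicValRat.of_nat, padicValNat.self (by norm_num)]; norm_num
  rw [h2] at h1
  omega

lemma irred (n : ℕ) : Irreducible ((X : ℚ[X]) ^ (3 ^ n) - C 3) :=
  X_pow_sub_C_irreducible_of_prime_pow Nat.prime_three (by norm_num) n no_rat_cube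

lemma minpoly_cC (n : ℕ) : minpoly ℚ (cC n) = (X : ℚ[X]) ^ (3 ^ n) - C 3 := by
  refine (minpoly.eq_of_irreducible_of_monic (irred n) ?_ ?_).symm
  · simp [cC_pow n, map_ofNat]
  · exact monic_X_pow_sub_C _ (by positivity)

lemma isIntegral_cC (n : ℕ) : IsIntegral ℚ (cC n) := by
  refine ⟨(X : ℚ[X]) ^ (3 ^ n) - C 3, monic_X_pow_sub_C _ (by positivity), ?_⟩
  simp [cC_pow n]

-- assume previous lemmas; re-state minimal




instance FD (n : ℕ) : FiniteDimensional ℚ (FF n) :=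
  IntermediateField.adjoin.finiteDimensional (isIntegral_cC n)

lemma finrank_FF (n : ℕ) : finrank ℚ (FF n) = 3 ^ n := by
  rw [FF, IntermediateField.adjoin.finrank (isIntegral_cC n), minpoly_cC n]
  simp [natDegree_X_pow_sub_C]

lemma FF_mono {i j : ℕ} (h : i ≤ j) : FF i ≤ FF j := by
  rw [FF, adjoin_simple_le_iff, ← cC_pow_sub h]
  exact pow_mem (mem_adjoin_simple_self ℚ (cC j)) _

def Rf : IntermediateField ℚ ℂ :=
  Subfield.toIntermediateField Complex.ofRealHom.fieldRange
    (fun q => ⟨(q : ℝ), by simp⟩)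

lemma FF_real (n : ℕ) : FF n ≤ Rf := by
  rw [FF, adjoin_simple_le_iff]
  exact ⟨aR n, rfl⟩

lemma im_eq_zero {n : ℕ} {z : ℂ} (hz : z ∈ FF n) : (z.re : ℂ) = z := by
  obtain ⟨r, hr⟩ := FF_real n hz
  rw [← hr]; simp

-- finiteDimensional for subfields
lemma fd_of_le {k : IntermediateField ℚ ℂ} {n : ℕ} (h : k ≤ FF n) :
    FiniteDimensional ℚ k := by
  haveI : FiniteDimensional ℚ (FF n).toSubmodule := FD n
  have : k.toSubmodule ≤ (FF n).toSubmodule := h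
  exact Submodule.finiteDimensional_of_le this






/-- uniqueness of nonneg real roots -/
lemma pow_inj {x y : ℝ} (hx : 0 ≤ x) (hy : 0 ≤ y) {m : ℕ} (hm : m ≠ 0)
    (h : x ^ m = y ^ m) : x = y :=
  (pow_left_strictMonoOn₀ hm).injOn hx hy h

lemma gen_pow (n : ℕ) : (AdjoinSimple.gen ℚ (cC n)) ^ ((3:ℕ) ^ n) = (3 : FF n) := by
  apply Subtype.ext
  push_cast [AdjoinSimple.coe_gen]
  exact cC_pow n

set_option synthInstance.maxHeartbeats 1000000 in
theorem classify {n : ℕ} {k : IntermediateField ℚ ℂ} (hk : k ≤ FF n) :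
    ∃ j ≤ n, k = FF j := by
  haveI : FiniteDimensional ℚ k := fd_of_le hk
  letI : Algebra k (FF n) := (IntermediateField.inclusion hk).toAlgebra
  haveI : IsScalarTower ℚ k (FF n) := IsScalarTower.of_algebraMap_eq fun q => Subtype.ext rfl
  haveI : FiniteDimensional k (FF n) := FiniteDimensional.right ℚ k (FF n)
  have hmul : finrank ℚ k * finrank k (FF n) = 3 ^ n := by
    rw [finrank_mul_finrank, finrank_FF]
  obtain ⟨j, hj, hdeg⟩ := (Nat.dvd_prime_pow Nat.prime_three).mp ⟨finrank k (FF n), hmul.symm⟩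
  have hrel : finrank k (FF n) = 3 ^ (n - j) := by
    have h3 : (3:ℕ) ^ n = 3 ^ j * 3 ^ (n - j) := by rw [← pow_add]; congr 1; omega
    rw [hdeg, h3] at hmul
    exact Nat.eq_of_mul_eq_mul_left (by positivity) hmul
  -- norm computation
  set g : FF n := AdjoinSimple.gen ℚ (cC n) with hg
  set N : k := Algebra.norm k g with hN
  have hembed : (algebraMap k ℂ) N = ∏ σ : (FF n) →ₐ[k] ℂ, σ g :=
    Algebra.norm_eq_prod_embeddings k ℂ g
  have hσ : ∀ σ : (FF n) →ₐ[k] ℂ, ‖σ g‖ = aR n := by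
    intro σ
    have h1 : (σ g) ^ ((3:ℕ) ^ n) = 3 := by
      rw [← map_pow]; erw [gen_pow n]; rw [map_ofNat]
    have h2 : ‖σ g‖ ^ ((3:ℕ) ^ n) = 3 := by
      rw [← norm_pow, h1]; simp
    refine pow_inj (m := 3 ^ n) (norm_nonneg _) (aR_pos n).le (pow_ne_zero n (by norm_num)) ?_
    rw [h2, aR_pow n]
  have hcard : Fintype.card ((FF n) →ₐ[k] ℂ) = 3 ^ (n - j) := by
    rw [AlgHom.card, hrel]
  have hnorm : ‖(algebraMap k ℂ) N‖ = aR j := by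
    rw [hembed, norm_prod]
    rw [Finset.prod_congr rfl (fun σ _ => hσ σ)]
    rw [Finset.prod_const, Finset.card_univ, hcard, aR_pow_sub hj]
  -- N is real and in k
  have hNk : (algebraMap k ℂ) N ∈ k := by
    have : (algebraMap k ℂ) N = (N : ℂ) := rfl
    rw [this]; exact N.2
  have hre : ((((algebraMap k ℂ) N).re : ℝ) : ℂ) = (algebraMap k ℂ) N :=
    im_eq_zero (n := n) (hk hNk)
  have habs : |((algebraMap k ℂ) N).re| = aR j := by
    have := hnorm
    rw [← hre] at this
    rwa [Complex.norm_real] at this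
  have hcj : cC j ∈ k := by
    rcases abs_cases (((algebraMap k ℂ) N).re) with ⟨he, _⟩ | ⟨he, _⟩
    · have : cC j = (algebraMap k ℂ) N := by
        rw [cC, ← habs, he, hre]
      rw [this]; exact hNk
    · have : cC j = -((algebraMap k ℂ) N) := by
        rw [cC, ← habs, he]; push_cast; rw [hre]
      rw [this]; exact neg_mem hNk
  have hle : FF j ≤ k := by rw [FF, adjoin_simple_le_iff]; exact hcj
  refine ⟨j, hj, (IntermediateField.eq_of_le_of_finrank_eq hle ?_).symm⟩
  rw [finrank_FF, hdeg]





lemma cC_zero : cC 0 = 3 := by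
  simp [cC, aR]

lemma cC_mem_of_le {i : ℕ} {k : IntermediateField ℚ ℂ} (hj : ∃ j, i ≤ j ∧ cC j ∈ k) :
    cC i ∈ k := by
  obtain ⟨j, hij, hjk⟩ := hj
  rw [← cC_pow_sub hij]
  exact pow_mem hjk _

lemma mem_K_iff {K : IntermediateField ℚ ℂ} (hK : K = ⨆ n : ℕ, FF (n + 1)) {x : ℂ} :
    x ∈ K ↔ ∃ n, x ∈ FF (n + 1) := by
  subst hK
  have dir : Directed (· ≤ ·) (fun n : ℕ => FF (n + 1)) :=
    Monotone.directed_le (fun i j h => FF_mono (by omega : i + 1 ≤ j + 1))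
  rw [← SetLike.mem_coe, IntermediateField.coe_iSup_of_directed dir, Set.mem_iUnion]
  rfl

theorem claimB {K : IntermediateField ℚ ℂ} (hK : K = ⨆ n : ℕ, FF (n + 1))
    {k : IntermediateField ℚ ℂ} (hkK : k ≤ K) (hne : k ≠ K) :
    ∃ m : ℕ, k = FF m := by
  have hbdd : ∃ m, ∀ i, cC i ∈ k → i ≤ m := by
    by_contra h
    push_neg at h
    apply hne
    refine le_antisymm hkK ?_
    rw [hK]
    refine iSup_le fun n => ?_
    rw [FF, adjoin_simple_le_iff]
    obtain ⟨i, hik, hni⟩ := h n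
    exact cC_mem_of_le ⟨i, by omega, hik⟩
  obtain ⟨b, hb⟩ := hbdd
  set S : Set ℕ := {i | cC i ∈ k} with hS
  have hS0 : 0 ∈ S := by
    simp only [hS, Set.mem_setOf_eq, cC_zero]
    have : ((3:ℚ):ℂ) ∈ k := k.algebraMap_mem (3:ℚ)
    simpa using this
  have hSb : BddAbove S := ⟨b, fun i hi => hb i hi⟩
  set m := sSup S with hm
  have hmS : m ∈ S := Nat.sSup_mem ⟨0, hS0⟩ hSb
  have hmax : ∀ i, cC i ∈ k → i ≤ m := fun i hi => le_csSup hSb hi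
  refine ⟨m, le_antisymm ?_ (by rw [FF, adjoin_simple_le_iff]; exact hmS)⟩
  intro x hx
  obtain ⟨n, hn⟩ := (mem_K_iff hK).mp (hkK hx)
  set Nn := max (n + 1) m with hNn
  have hxN : x ∈ FF Nn := FF_mono (le_max_left _ _) hn
  set k' := FF m ⊔ ℚ⟮x⟯ with hk'
  have hk'N : k' ≤ FF Nn :=
    sup_le (FF_mono (le_max_right _ _)) ((adjoin_simple_le_iff).mpr hxN)
  obtain ⟨j, _, hj⟩ := classify hk'N
  have hk'k : k' ≤ k :=
    sup_le (by rw [FF, adjoin_simple_le_iff]; exact hmS) ((adjoin_simple_le_iff).mpr hx)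
  have hcj : cC j ∈ k := hk'k (hj ▸ mem_adjoin_simple_self ℚ (cC j))
  have : k' ≤ FF m := hj.trans_le (FF_mono (hmax j hcj))
  exact this (le_sup_right (α := IntermediateField ℚ ℂ) (mem_adjoin_simple_self ℚ x))





instance NF (n : ℕ) : NumberField (FF n) := by
  haveI : CharZero (FF n) := charZero_of_injective_algebraMap (algebraMap ℚ (FF n)).injective
  exact ⟨⟩

lemma gen_integral (n : ℕ) : IsIntegral ℤ (AdjoinSimple.gen ℚ (cC n)) := by
  refine ⟨(X : ℤ[X]) ^ (3 ^ n) - C 3, monic_X_pow_sub_C _ (by positivity), ?_⟩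
  have := gen_pow n
  simp only [eval₂_sub, eval₂_X_pow, eval₂_C]
  rw [this]
  simp
  exact sub_self _

lemma denom_top (n : ℕ) : denomIdeal (FF n) (AdjoinSimple.gen ℚ (cC n)) = ⊤ := by
  rw [Ideal.eq_top_iff_one]
  show IsIntegral ℤ (((1 : NumberField.RingOfIntegers (FF n)) : FF n) * _)
  rw [show ((1 : NumberField.RingOfIntegers (FF n)) : FF n) = 1 from rfl]; erw [one_mul]
  exact gen_integral n

lemma place_gen (n : ℕ) (w : NumberField.InfinitePlace (FF n)) :
    w (AdjoinSimple.gen ℚ (cC n)) = aR n := by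
  erw [← NumberField.InfinitePlace.norm_embedding_eq]
  refine pow_inj (norm_nonneg _) (aR_pos n).le (m := 3 ^ n) (pow_ne_zero n (by norm_num)) ?_
  rw [← norm_pow]; erw [← map_pow, gen_pow n]; rw [aR_pow n, map_ofNat]
  simp

lemma algHeight_cC (n : ℕ) :
    algHeight (cC n) = (((3:ℝ) ^ (n : ℕ))⁻¹) * Real.log 3 := by
  rw [algHeight, dif_pos (isIntegral_cC n)]
  show nfHeight (FF n) (AdjoinSimple.gen ℚ (cC n)) = _
  unfold nfHeight; rw [denom_top n, Ideal.absNorm_top]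
  simp only [Nat.cast_one, Real.log_one, add_zero]
  have hlog : ∀ w : NumberField.InfinitePlace (FF n),
      (w.mult : ℝ) * Real.log (max 1 (w (AdjoinSimple.gen ℚ (cC n)))) =
      (w.mult : ℝ) * ((((3:ℝ) ^ (n:ℕ))⁻¹) * Real.log 3) := by
    intro w
    rw [place_gen n w, max_eq_right (one_le_aR n), aR, Real.log_rpow (by norm_num)]
  rw [Finset.sum_congr rfl (fun w _ => hlog w), ← Finset.sum_mul,
    ← Nat.cast_sum, NumberField.InfinitePlace.sum_mult_eq, finrank_FF]
  have h0 : ((3:ℕ) ^ n : ℝ) ≠ 0 := by positivity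
  push_cast
  field_simp

end CubeTower

open CubeTower in

open CubeTower in
/-- For `K = ⋃_n ℚ(3^{1/3^n})` with compatibly chosen (positive real) roots, every proper
subfield of `K` equals `ℚ(3^{1/3^i})` for some `i`, hence is finite over `ℚ`; consequently
`K` is not a Bogomolov extension of any proper subfield of itself. -/
theorem proper_subfields_of_cubic_tower
    (K : IntermediateField ℚ ℂ)
    (hK : K = ⨆ n : ℕ, ℚ⟮((((3 : ℝ) ^ (((3 : ℝ) ^ (n + 1 : ℕ))⁻¹) : ℝ) : ℂ))⟯) :
    ∀ k : IntermediateField ℚ ℂ, k ≤ K → k ≠ K →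
      (∃ i : ℕ, k = ℚ⟮((((3 : ℝ) ^ (((3 : ℝ) ^ (i : ℕ))⁻¹) : ℝ) : ℂ))⟯) ∧
      FiniteDimensional ℚ ↥k ∧
      ¬ IsBogomolovExtension k K := by
  intro k hkK hne
  have hK' : K = ⨆ n : ℕ, FF (n + 1) := hK
  obtain ⟨m, hm⟩ := claimB hK' hkK hne
  refine ⟨⟨m, hm⟩, by rw [hm]; infer_instance, ?_⟩
  rintro ⟨ε, hε, hprop⟩
  obtain ⟨N0, hN0⟩ := pow_unbounded_of_one_lt (Real.log 3 / ε) (by norm_num : (1:ℝ) < 3)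
  set N := max N0 (m + 1) with hN
  have hNm : m < N := lt_of_lt_of_le (Nat.lt_succ_self m) (le_max_right _ _)
  have h3N : Real.log 3 / ε < (3:ℝ) ^ N :=
    lt_of_lt_of_le hN0 (pow_le_pow_right₀ (by norm_num) (le_max_left _ _))
  have hlog3 : 0 < Real.log 3 := Real.log_pos (by norm_num)
  have hpos : 0 < algHeight (cC N) := by
    rw [algHeight_cC N]; positivity
  have hlt : algHeight (cC N) < ε := by
    rw [algHeight_cC N, inv_mul_lt_iff₀ (by positivity : (0:ℝ) < (3:ℝ)^N)]
    calc Real.log 3 < ε * (3:ℝ) ^ N := by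
          rw [← div_lt_iff₀' hε]; exact h3N
      _ = (3:ℝ) ^ N * ε := mul_comm _ _
  have hmem : cC N ∈ K := by
    rw [hK']
    exact le_iSup (fun n : ℕ => FF (n + 1)) N
      (FF_mono (Nat.le_succ N) (mem_adjoin_simple_self ℚ (cC N)))
  have hne0 : cC N ≠ 0 := by
    rw [cC]
    exact_mod_cast (aR_pos N).ne'
  have hmemk : cC N ∈ k := hprop (cC N) hmem hne0 hpos hlt
  rw [hm] at hmemk
  have hle : FF N ≤ FF m := by
    rw [FF, adjoin_simple_le_iff]; exact hmemk
  have hfin : (3:ℕ) ^ N ≤ 3 ^ m := by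
    rw [← finrank_FF N, ← finrank_FF m]
    haveI : Module.Finite ℚ (FF m).toSubmodule := FD m
    exact Submodule.finrank_mono (show (FF N).toSubmodule ≤ (FF m).toSubmodule from hle)
  have : N ≤ m := (Nat.pow_le_pow_iff_right (by norm_num)).mp hfin
  omega
end
end
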